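/- arXiv:2502.01244 — 2 statements merged into one kernel-verified Lean document; each statement's English description precedes it below -/
import Mathlib

section
/- Let T ≥ 1 be an integer and let z, z' ∈ [0,1]^T satisfy z ⪰ z'. If μ ∈ [0,1] satisfies μ ≥ μ_z, then Ψ(z,μ) ≤ Ψ(z',μ). -/
open MeasureTheory Set

/-- Extended-real logarithm: `log ⊤ = ⊤`, `log x = -∞` for `x ≤ 0` (in particular `log 0 = -∞`). -/
noncomputable def elog (x : EReal) : EReal :=
  if x = ⊤ then ⊤ else if x ≤ 0 then ⊥ else ((Real.log x.toReal : ℝ) : EReal)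

/-- Lower endpoint `-1/(1-μ)` of the betting interval, with the convention `1/0 = +∞`. -/
noncomputable def betLower (μ : ℝ) : EReal := if μ = 1 then ⊥ else ((-(1 - μ)⁻¹ : ℝ) : EReal)

/-- Upper endpoint `1/μ` of the betting interval, with the convention `1/0 = +∞`. -/
noncomputable def betUpper (μ : ℝ) : EReal := if μ = 0 then ⊤ else ((μ⁻¹ : ℝ) : EReal)

/-- The betting interval `A_μ = [-1/(1-μ), 1/μ]` (as a set of extended reals). -/
noncomputable def betSet (μ : ℝ) : Set EReal := Set.Icc (betLower μ) (betUpper μ)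

/-- `(1/T) ∑_t log(1 + α (z_t - μ))`, with EReal conventions (`0 * ±∞ = 0`, `log 0 = -∞`). -/
noncomputable def betTerm {T : ℕ} (z : Fin T → ℝ) (μ : ℝ) (α : EReal) : EReal :=
  (((T : ℝ)⁻¹ : ℝ) : EReal) * ∑ t : Fin T, elog (1 + α * ((z t - μ : ℝ) : EReal))

/-- `Ψ(z, μ) = sup_{α ∈ A_μ} (1/T) ∑_t log(1 + α (z_t - μ))`. -/
noncomputable def Psi {T : ℕ} (z : Fin T → ℝ) (μ : ℝ) : EReal :=
  ⨆ α ∈ betSet μ, betTerm z μ α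

/-- `μ_z = (1/T) ∑_t z_t`. -/
noncomputable def muz {T : ℕ} (z : Fin T → ℝ) : ℝ := (T : ℝ)⁻¹ * ∑ t, z t

lemma elog_mono : Monotone elog := by
  intro x y hxy
  unfold elog
  by_cases hy : y = ⊤
  · simp [hy]
  by_cases hxt : x = ⊤
  · exact absurd (top_le_iff.1 (hxt ▸ hxy)) hy
  by_cases hx : x ≤ 0
  · simp only [hxt, hx, if_false, if_true]
    exact bot_le
  have hx0 : (0 : EReal) < x := lt_of_not_ge hx
  have hy0 : ¬ y ≤ 0 := fun h => hx (hxy.trans h)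
  have hxb : x ≠ ⊥ := fun h => by simp [h] at hx0
  have hyb : y ≠ ⊥ := fun h => by rw [h] at hxy; exact hxb (le_bot_iff.1 hxy)
  lift x to ℝ using ⟨hxt, hxb⟩
  lift y to ℝ using ⟨hy, hyb⟩
  simp only [hxt, hy, hx, hy0, if_false, EReal.toReal_coe, EReal.coe_le_coe_iff]
  exact Real.log_le_log (by exact_mod_cast hx0) (by exact_mod_cast hxy)

lemma elog_one : elog 1 = 0 := by
  unfold elog
  rw [if_neg (by rw [show (1:EReal) = ((1:ℝ):EReal) from rfl]; exact EReal.coe_ne_top 1 : ¬(1 : EReal) = ⊤), if_neg (by norm_num : ¬(1 : EReal) ≤ 0)]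
  norm_num

lemma elog_coe_le (x : ℝ) : elog ((x : ℝ) : EReal) ≤ ((x - 1 : ℝ) : EReal) := by
  unfold elog
  by_cases hx : (x : EReal) ≤ 0
  · simp [hx]
  have hx0 : 0 < x := by exact_mod_cast lt_of_not_ge hx
  simp only [EReal.coe_ne_top, if_false, hx, if_neg, EReal.toReal_coe, EReal.coe_le_coe_iff]
  exact Real.log_le_sub_one_of_pos hx0

/-- For `α ≤ 0` in `EReal` and reals `c' ≤ c`, `α * c ≤ α * c'`. -/
lemma mul_coe_le_of_nonpos {α : EReal} (hα : α ≤ 0) {c c' : ℝ} (h : c' ≤ c) :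
    α * (c : EReal) ≤ α * (c' : EReal) := by
  induction α with
  | bot =>
    rcases lt_trichotomy c' 0 with h1 | h1 | h1
    · rw [EReal.bot_mul_coe_of_neg h1]; exact le_top
    · subst h1
      rw [EReal.coe_zero, mul_zero]
      rcases eq_or_lt_of_le h with h2 | h2
      · rw [← h2, EReal.coe_zero, mul_zero]
      · rw [EReal.bot_mul_coe_of_pos h2]; exact bot_le
    · rw [EReal.bot_mul_coe_of_pos (lt_of_lt_of_le h1 h)]; exact bot_le
  | coe a =>
    rw [← EReal.coe_mul, ← EReal.coe_mul, EReal.coe_le_coe_iff]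
    have ha : a ≤ 0 := by exact_mod_cast hα
    nlinarith
  | top => exact absurd hα (by simp)

lemma coe_sum_fin {T : ℕ} (f : Fin T → ℝ) :
    ∑ t : Fin T, ((f t : ℝ) : EReal) = ((∑ t : Fin T, f t : ℝ) : EReal) :=
  (map_sum (⟨⟨Real.toEReal, EReal.coe_zero⟩, EReal.coe_add⟩ : ℝ →+ EReal) f Finset.univ).symm

lemma zero_mem_betSet {μ : ℝ} (hμ : μ ∈ Set.Icc (0 : ℝ) 1) : (0 : EReal) ∈ betSet μ := by
  constructor
  · unfold betLower
    split
    · exact bot_le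
    · rw [← EReal.coe_zero, EReal.coe_le_coe_iff]
      simp only [neg_nonpos]
      exact inv_nonneg.2 (by linarith [hμ.2])
  · unfold betUpper
    split
    · exact le_top
    · rw [← EReal.coe_zero, EReal.coe_le_coe_iff]
      exact inv_nonneg.2 hμ.1

lemma betTerm_zero {T : ℕ} (z : Fin T → ℝ) (μ : ℝ) : betTerm z μ 0 = 0 := by
  unfold betTerm
  have : ∀ t : Fin T, elog (1 + (0 : EReal) * ((z t - μ : ℝ) : EReal)) = 0 := by
    intro t; rw [zero_mul, add_zero, elog_one]
  rw [Finset.sum_congr rfl (fun t _ => this t), Finset.sum_const_zero, mul_zero]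

/-- If `z ⪰ z'` (coordinatewise) with values in `[0,1]` and `μ ∈ [0,1]` with `μ ≥ μ_z`,
then `Ψ(z, μ) ≤ Ψ(z', μ)`. -/
theorem psi_le_of_ge {T : ℕ} (hT : 1 ≤ T) (z z' : Fin T → ℝ)
    (hz : ∀ t, z t ∈ Set.Icc (0 : ℝ) 1) (hz' : ∀ t, z' t ∈ Set.Icc (0 : ℝ) 1)
    (hord : ∀ t, z' t ≤ z t) (μ : ℝ) (hμ : μ ∈ Set.Icc (0 : ℝ) 1) (hμz : muz z ≤ μ) :
    Psi z μ ≤ Psi z' μ := by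
  have hTpos : (0 : ℝ) < T := by exact_mod_cast hT
  have hTinv : (0 : ℝ) ≤ (T : ℝ)⁻¹ := inv_nonneg.2 hTpos.le
  have hsum : ∑ t, z t ≤ T * μ := by
    have := hμz
    unfold muz at this
    calc ∑ t, z t = T * ((T:ℝ)⁻¹ * ∑ t, z t) := by field_simp
    _ ≤ T * μ := by nlinarith
  by_cases hμ0 : μ = 0
  · -- then all z t = 0 and z' = z
    have hz0 : ∀ t, z t = 0 := by
      intro t
      by_contra h
      have hpos : 0 < z t := lt_of_le_of_ne (hz t).1 (Ne.symm h)
      have : 0 < ∑ t, z t := Finset.sum_pos' (fun t _ => (hz t).1) ⟨t, Finset.mem_univ t, hpos⟩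
      rw [hμ0] at hsum
      linarith
    have hzz' : z = z' := by
      funext t
      have := (hz' t).1
      have := hord t
      rw [hz0 t] at *
      linarith
    rw [hzz']
  · -- μ ≠ 0
    have h0le : (0 : EReal) ≤ Psi z' μ := by
      rw [← betTerm_zero z' μ]
      exact le_biSup _ (zero_mem_betSet hμ)
    apply iSup₂_le
    intro α hα
    by_cases hα0 : α ≤ 0
    · -- nonpositive bets: termwise monotone
      refine le_trans ?_ (le_biSup _ hα)
      unfold betTerm
      apply mul_le_mul_of_nonneg_left _ (by exact_mod_cast hTinv)
      apply Finset.sum_le_sum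
      intro t _
      apply elog_mono
      apply add_le_add_right
      exact mul_coe_le_of_nonpos hα0 (by linarith [hord t])
    · -- positive bets: betTerm z μ α ≤ 0
      refine le_trans ?_ h0le
      push_neg at hα0
      have hαbot : α ≠ ⊥ := fun h => by simp [h] at hα0
      have hαtop : α ≠ ⊤ := by
        intro h
        rw [h] at hα
        have := hα.2
        unfold betUpper at this
        rw [if_neg hμ0] at this
        exact absurd this (by simp)
      lift α to ℝ using ⟨hαtop, hαbot⟩ with a
      have ha0 : 0 ≤ a := by exact_mod_cast hα0.le
      unfold betTerm
      have hterm : ∀ t : Fin T, elog (1 + (a : EReal) * ((z t - μ : ℝ) : EReal))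
          ≤ ((a * (z t - μ) : ℝ) : EReal) := by
        intro t
        rw [← EReal.coe_mul, ← EReal.coe_one, ← EReal.coe_add]
        have := elog_coe_le (1 + a * (z t - μ))
        simpa using this
      calc (((T : ℝ)⁻¹ : ℝ) : EReal) * ∑ t : Fin T, elog (1 + (a:EReal) * ((z t - μ : ℝ) : EReal))
          ≤ (((T : ℝ)⁻¹ : ℝ) : EReal) * ∑ t : Fin T, ((a * (z t - μ) : ℝ) : EReal) := by
            apply mul_le_mul_of_nonneg_left (Finset.sum_le_sum (fun t _ => hterm t))
              (by exact_mod_cast hTinv)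
        _ = (((T : ℝ)⁻¹ * ∑ t : Fin T, (a * (z t - μ)) : ℝ) : EReal) := by
            rw [coe_sum_fin, ← EReal.coe_mul]
        _ ≤ 0 := by
            rw [← EReal.coe_zero, EReal.coe_le_coe_iff]
            have : ∑ t : Fin T, (a * (z t - μ)) = a * (∑ t, z t - T * μ) := by
              rw [← Finset.mul_sum, Finset.sum_sub_distrib]
              simp [Finset.sum_const, mul_comm]
            rw [this]
            have h1 : ∑ t, z t - T * μ ≤ 0 := by linarith
            exact mul_nonpos_of_nonneg_of_nonpos hTinv
              (mul_nonpos_of_nonneg_of_nonpos ha0 h1)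
end

section
/- Finite reduction of the lower CDF band. Let x_1,…,x_T ∈ [0,1], let x^{(1)} ≤ x^{(2)} ≤ … ≤ x^{(T)} be the sorted values, and set x^{(0)} = 0, x^{(T+1)} = 1. Let F̂(y) = (1/T)·card{t ∈ [1:T] : x_t ≤ y} and C(y) = card{t ∈ [1:T] : x_t ≤ y}. Then for every y ∈ [0,1] and δ ∈ (0,1], sup_{y_- ∈ [0,y]} kl_-^{-1}( F̂(y_-), (1/T) log(2√T / ((y − y_-)δ)) ) = max_{t ∈ [0:C(y)]} kl_-^{-1}( t/T, (1/T) log(2√T / ((y − x^{(t)})δ)) ), where log(2√T/(0·δ)) is interpreted as +∞. -/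
open MeasureTheory Set

/-- The binary relative entropy `kl(p, q)`, valued in the extended reals, with
`kl(0,q) = log(1/(1-q))`, `kl(1,q) = log(1/q)`, `kl(p,0) = +∞` for `p > 0` and
`kl(p,1) = +∞` for `p < 1`. -/
noncomputable def bkl (p q : ℝ) : EReal :=
  if p = 0 then (if q = 1 then ⊤ else ((Real.log (1 / (1 - q)) : ℝ) : EReal))
  else if p = 1 then (if q = 0 then ⊤ else ((Real.log (1 / q) : ℝ) : EReal))
  else if q = 0 ∨ q = 1 then ⊤
  else ((p * Real.log (p / q) + (1 - p) * Real.log ((1 - p) / (1 - q)) : ℝ) : EReal)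

/-- The upper inverse `kl_+^{-1}(p, C) = sup {q ∈ [0,1] : kl(p,q) ≤ C}`. -/
noncomputable def klInvPlus (p : ℝ) (C : EReal) : ℝ :=
  sSup {q : ℝ | q ∈ Set.Icc (0 : ℝ) 1 ∧ bkl p q ≤ C}

/-- The lower inverse `kl_-^{-1}(p, C) = inf {q ∈ [0,1] : kl(p,q) ≤ C}`. -/
noncomputable def klInvMinus (p : ℝ) (C : EReal) : ℝ :=
  sInf {q : ℝ | q ∈ Set.Icc (0 : ℝ) 1 ∧ bkl p q ≤ C}

/-- `log(2√T/(g·δ))`, interpreted as `+∞` when `g = 0`. -/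
noncomputable def bnd (T : ℕ) (g δ : ℝ) : EReal :=
  if g = 0 then ⊤ else ((Real.log (2 * Real.sqrt T / (g * δ)) : ℝ) : EReal)

/-- `C(y) = card {t ∈ [1:T] : x_t ≤ y}`. -/
noncomputable def cnt {T : ℕ} (x : Fin T → ℝ) (y : ℝ) : ℕ :=
  (Finset.univ.filter fun t => x t ≤ y).card

/-- The empirical CDF `F̂(y) = C(y)/T`. -/
noncomputable def empCDF {T : ℕ} (x : Fin T → ℝ) (y : ℝ) : ℝ := (cnt x y : ℝ) / T

lemma bkl_self {p : ℝ} (hp0 : 0 ≤ p) (hp1 : p ≤ 1) : bkl p p = 0 := by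
  unfold bkl
  rcases eq_or_ne p 0 with h0 | h0
  · subst h0; norm_num
  rcases eq_or_ne p 1 with h1 | h1
  · subst h1; norm_num
  have hno : ¬ (p = 0 ∨ p = 1) := by tauto
  rw [if_neg h0, if_neg h1, if_neg hno]
  have h1' : (1:ℝ) - p ≠ 0 := sub_ne_zero.2 (Ne.symm h1)
  rw [div_self h0, div_self h1']
  norm_num

lemma klInvMinus_nonneg (p : ℝ) (C : EReal) : 0 ≤ klInvMinus p C :=
  Real.sInf_nonneg fun _ hq => hq.1.1

lemma klInvMinus_le_self {p : ℝ} (hp0 : 0 ≤ p) (hp1 : p ≤ 1) {C : EReal} (hC : 0 ≤ C) :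
    klInvMinus p C ≤ p :=
  csInf_le ⟨0, fun _ hq => hq.1.1⟩ ⟨⟨hp0, hp1⟩, by rw [bkl_self hp0 hp1]; exact hC⟩

lemma klInvMinus_anti {p : ℝ} (hp0 : 0 ≤ p) (hp1 : p ≤ 1) {C1 C2 : EReal}
    (h0 : 0 ≤ C1) (h12 : C1 ≤ C2) : klInvMinus p C2 ≤ klInvMinus p C1 :=
  csInf_le_csInf ⟨0, fun _ hq => hq.1.1⟩
    ⟨p, ⟨⟨hp0, hp1⟩, by rw [bkl_self hp0 hp1]; exact h0⟩⟩
    (fun q hq => ⟨hq.1, le_trans hq.2 h12⟩)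

noncomputable def klAux (q p : ℝ) : ℝ :=
  p * Real.log p + (1 - p) * Real.log (1 - p) - p * Real.log q - (1 - p) * Real.log (1 - q)

lemma klAux_continuous (q : ℝ) : Continuous (klAux q) := by
  unfold klAux
  have h1 : Continuous fun p : ℝ => p * Real.log p := Real.continuous_mul_log
  have h2 : Continuous fun p : ℝ => (1 - p) * Real.log (1 - p) :=
    Real.continuous_mul_log.comp (continuous_const.sub continuous_id)
  fun_prop

lemma klAux_hasDerivAt (q : ℝ) {p : ℝ} (hp0 : p ≠ 0) (hp1 : p ≠ 1) :
    HasDerivAt (klAux q)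
      (Real.log p - Real.log (1 - p) - Real.log q + Real.log (1 - q)) p := by
  have h1 : HasDerivAt (fun p : ℝ => p * Real.log p) (Real.log p + 1) p :=
    Real.hasDerivAt_mul_log hp0
  have hsub : HasDerivAt (fun p : ℝ => 1 - p) (-1) p := (hasDerivAt_id p).const_sub 1
  have h2 : HasDerivAt (fun p : ℝ => (1 - p) * Real.log (1 - p))
      ((Real.log (1 - p) + 1) * (-1)) p :=
    (Real.hasDerivAt_mul_log (sub_ne_zero.2 (Ne.symm hp1))).comp p hsub
  have h3 : HasDerivAt (fun p : ℝ => p * Real.log q) (Real.log q) p := by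
    simpa using (hasDerivAt_id p).mul_const (Real.log q)
  have h4 : HasDerivAt (fun p : ℝ => (1 - p) * Real.log (1 - q)) (-Real.log (1 - q)) p := by
    simpa using hsub.mul_const (Real.log (1 - q))
  have := ((h1.add h2).sub h3).sub h4
  convert this using 1
  · rfl
  · rfl
  · ext x; simp only [klAux, Pi.add_apply, Pi.sub_apply]
  · ring

lemma klAux_monotoneOn {q : ℝ} (hq0 : 0 < q) (hq1 : q < 1) :
    MonotoneOn (klAux q) (Set.Icc q 1) := by
  have hi : interior (Set.Icc q 1) = Set.Ioo q 1 := interior_Icc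
  apply monotoneOn_of_deriv_nonneg (convex_Icc q 1) (klAux_continuous q).continuousOn
  · rw [hi]
    intro p hp
    exact ((klAux_hasDerivAt q (ne_of_gt (lt_trans hq0 hp.1))
      (ne_of_lt hp.2)).differentiableAt).differentiableWithinAt
  · rw [hi]
    intro p hp
    rw [(klAux_hasDerivAt q (ne_of_gt (lt_trans hq0 hp.1)) (ne_of_lt hp.2)).deriv]
    have l1 : Real.log q ≤ Real.log p := Real.log_le_log hq0 hp.1.le
    have l2 : Real.log (1 - p) ≤ Real.log (1 - q) :=
      Real.log_le_log (by linarith [hp.2]) (by linarith [hp.1])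
    linarith

lemma bkl_eq_klAux {p q : ℝ} (hp0 : 0 ≤ p) (hp1 : p ≤ 1) (hq0 : 0 < q) (hq1 : q < 1) :
    bkl p q = ((klAux q p : ℝ) : EReal) := by
  have hq0' : q ≠ 0 := ne_of_gt hq0
  have hq1' : q ≠ 1 := ne_of_lt hq1
  have h1q : (1:ℝ) - q ≠ 0 := by intro h; apply hq1'; linarith
  unfold bkl klAux
  rcases eq_or_ne p 0 with h0 | h0
  · subst h0
    rw [if_pos rfl, if_neg hq1']
    norm_num [Real.log_div one_ne_zero h1q]
  rcases eq_or_ne p 1 with h1 | h1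
  · subst h1
    rw [if_neg h0, if_pos rfl, if_neg hq0']
    norm_num [Real.log_div one_ne_zero hq0']
  have hno : ¬ (q = 0 ∨ q = 1) := by tauto
  rw [if_neg h0, if_neg h1, if_neg hno]
  have h1p : (1:ℝ) - p ≠ 0 := sub_ne_zero.2 (Ne.symm h1)
  rw [EReal.coe_eq_coe_iff, Real.log_div h0 hq0', Real.log_div h1p h1q]
  ring

lemma bkl_mono_left {q p1 p2 : ℝ} (hq : 0 ≤ q) (h1 : q ≤ p1) (h12 : p1 ≤ p2) (h2 : p2 ≤ 1) :
    bkl p1 q ≤ bkl p2 q := by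
  rcases eq_or_lt_of_le hq with hq0 | hq0
  · -- q = 0
    rcases eq_or_ne p2 0 with hp2 | hp2
    · have hp1 : p1 = 0 := le_antisymm (hp2 ▸ h12) (hq0 ▸ h1)
      rw [hp1, hp2]
    · have : bkl p2 q = ⊤ := by
        unfold bkl
        rw [if_neg hp2]
        rcases eq_or_ne p2 1 with hp21 | hp21
        · rw [if_pos hp21, if_pos hq0.symm]
        · rw [if_neg hp21, if_pos (Or.inl hq0.symm)]
      rw [this]; exact le_top
  rcases lt_or_eq_of_le (h1.trans (h12.trans h2)) with hq1 | hq1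
  · rw [bkl_eq_klAux (hq.trans h1) (h12.trans h2) hq0 hq1,
      bkl_eq_klAux (hq.trans (h1.trans h12)) h2 hq0 hq1, EReal.coe_le_coe_iff]
    exact klAux_monotoneOn hq0 hq1 ⟨h1, h12.trans h2⟩ ⟨h1.trans h12, h2⟩ h12
  · have : p1 = p2 := by linarith
    rw [this]

lemma klInvMinus_mono {p1 p2 : ℝ} (h0 : 0 ≤ p1) (h12 : p1 ≤ p2) (h2 : p2 ≤ 1)
    {C : EReal} (hC : 0 ≤ C) : klInvMinus p1 C ≤ klInvMinus p2 C := by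
  unfold klInvMinus
  have hne : {q : ℝ | q ∈ Set.Icc (0:ℝ) 1 ∧ bkl p2 q ≤ C}.Nonempty :=
    ⟨p2, ⟨h0.trans h12, h2⟩, by rw [bkl_self (h0.trans h12) h2]; exact hC⟩
  apply le_csInf hne
  rintro q ⟨⟨hq0, hq1⟩, hbkl⟩
  rcases le_or_gt p1 q with h | h
  · exact le_trans (klInvMinus_le_self h0 (h12.trans h2) hC) h
  · exact csInf_le ⟨0, fun _ hr => hr.1.1⟩
      (⟨⟨hq0, hq1⟩, le_trans (bkl_mono_left hq0 h.le h12 h2) hbkl⟩ :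
        q ∈ {q : ℝ | q ∈ Set.Icc (0 : ℝ) 1 ∧ bkl p1 q ≤ C})

lemma bnd_nonneg {T : ℕ} (hT : 1 ≤ T) {g δ : ℝ} (hg0 : 0 ≤ g) (hg1 : g ≤ 1)
    (hδ0 : 0 < δ) (hδ1 : δ ≤ 1) : (0 : EReal) ≤ bnd T g δ := by
  unfold bnd
  split_ifs with h
  · exact le_top
  · have hg : 0 < g := lt_of_le_of_ne hg0 (Ne.symm h)
    have hT1 : (1 : ℝ) ≤ Real.sqrt T := by
      rw [show (1:ℝ) = Real.sqrt 1 from Real.sqrt_one.symm]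
      exact Real.sqrt_le_sqrt (by exact_mod_cast hT)
    have h1 : (1 : ℝ) ≤ 2 * Real.sqrt T / (g * δ) := by
      rw [le_div_iff₀ (by positivity)]
      nlinarith
    exact EReal.coe_nonneg.mpr (Real.log_nonneg h1)

lemma bnd_anti {T : ℕ} (hT : 1 ≤ T) {δ g1 g2 : ℝ} (hδ0 : 0 < δ) (hg2 : 0 ≤ g2)
    (h : g2 ≤ g1) : bnd T g1 δ ≤ bnd T g2 δ := by
  rcases eq_or_ne g2 0 with h2 | h2
  · simp only [bnd]
    rw [if_pos h2]
    exact le_top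
  · have hg2' : 0 < g2 := lt_of_le_of_ne hg2 (Ne.symm h2)
    have hg1' : 0 < g1 := lt_of_lt_of_le hg2' h
    have hT' : (0:ℝ) < Real.sqrt T := Real.sqrt_pos.mpr (by exact_mod_cast hT)
    simp only [bnd]
    rw [if_neg h2, if_neg (ne_of_gt hg1'), EReal.coe_le_coe_iff]
    apply Real.log_le_log (by positivity)
    have hp : (0:ℝ) < 2 * Real.sqrt T := by positivity
    apply div_le_div_of_nonneg_left hp.le (by positivity)
    nlinarith

lemma cnt_eq_card {T : ℕ} (x : Fin T → ℝ) (s : ℕ → ℝ) (σ : Equiv.Perm (Fin T))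
    (hσ : ∀ t : Fin T, s (t + 1) = x (σ t)) (ym : ℝ) :
    cnt x ym = (Finset.univ.filter fun t : Fin T => s ((t : ℕ) + 1) ≤ ym).card := by
  unfold cnt
  apply Finset.card_bij (fun t _ => σ.symm t)
  · intro a ha
    simp only [Finset.mem_filter, Finset.mem_univ, true_and] at ha ⊢
    rw [hσ (σ.symm a), Equiv.apply_symm_apply]
    exact ha
  · intro a _ b _ hab
    exact σ.symm.injective hab
  · intro b hb
    simp only [Finset.mem_filter, Finset.mem_univ, true_and] at hb ⊢
    exact ⟨σ b, by rw [← hσ b]; exact hb, σ.symm_apply_apply b⟩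

lemma s_cnt_le {T : ℕ} (x : Fin T → ℝ) (s : ℕ → ℝ)
    (hs0 : s 0 = 0) (hsmono : ∀ i j, i ≤ j → j ≤ T + 1 → s i ≤ s j)
    (σ : Equiv.Perm (Fin T)) (hσ : ∀ t : Fin T, s (t + 1) = x (σ t))
    {ym : ℝ} (hym : 0 ≤ ym) : s (cnt x ym) ≤ ym := by
  set k := cnt x ym with hk
  rcases Nat.eq_zero_or_pos k with h0 | hpos
  · rw [h0, hs0]; exact hym
  by_contra hcon
  push_neg at hcon
  have hcard : (Finset.univ.filter fun t : Fin T => s ((t : ℕ) + 1) ≤ ym).card = k :=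
    (cnt_eq_card x s σ hσ ym).symm
  have hlt : ∀ t ∈ (Finset.univ.filter fun t : Fin T => s ((t : ℕ) + 1) ≤ ym),
      (t : ℕ) + 1 < k := by
    intro t ht
    simp only [Finset.mem_filter, Finset.mem_univ, true_and] at ht
    by_contra hge
    push_neg at hge
    have h1 : s k ≤ s ((t : ℕ) + 1) :=
      hsmono k ((t : ℕ) + 1) hge (by have := t.isLt; omega)
    linarith
  have hle : k ≤ k - 1 := by
    calc k = (Finset.univ.filter fun t : Fin T => s ((t : ℕ) + 1) ≤ ym).card := hcard.symm
      _ ≤ (Finset.range (k - 1)).card := by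
          apply Finset.card_le_card_of_injOn (fun i : Fin T => (i : ℕ))
          · intro t ht
            simp only [Finset.mem_coe, Finset.mem_range]
            have := hlt t ht
            omega
          · intro a _ b _ hab
            exact Fin.val_injective hab
      _ = k - 1 := Finset.card_range _
  omega

lemma le_cnt_s {T : ℕ} (hT : 1 ≤ T) (x : Fin T → ℝ) (s : ℕ → ℝ)
    (hsmono : ∀ i j, i ≤ j → j ≤ T + 1 → s i ≤ s j)
    (σ : Equiv.Perm (Fin T)) (hσ : ∀ t : Fin T, s (t + 1) = x (σ t))
    {t : ℕ} (ht : t ≤ T) : t ≤ cnt x (s t) := by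
  rw [cnt_eq_card x s σ hσ]
  calc t = (Finset.range t).card := (Finset.card_range t).symm
    _ ≤ _ := by
        apply Finset.card_le_card_of_injOn
          (fun i : ℕ => if h : i < T then (⟨i, h⟩ : Fin T) else ⟨0, by omega⟩)
        · intro i hi
          rw [Finset.mem_coe, Finset.mem_range] at hi
          have hiT : i < T := lt_of_lt_of_le hi ht
          simp only [Finset.mem_coe]
          rw [dif_pos hiT]
          simp only [Finset.mem_filter, Finset.mem_univ, true_and]
          exact hsmono (i + 1) t (by omega) (by omega)
        · intro a ha b hb hab
          simp only [Finset.mem_coe, Finset.mem_range] at ha hb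
          have := congrArg Fin.val hab
          simpa [dif_pos (lt_of_lt_of_le ha ht), dif_pos (lt_of_lt_of_le hb ht)] using this

lemma cnt_mono {T : ℕ} (x : Fin T → ℝ) {a b : ℝ} (h : a ≤ b) : cnt x a ≤ cnt x b := by
  apply Finset.card_le_card
  intro t ht
  simp only [Finset.mem_filter, Finset.mem_univ, true_and] at ht ⊢
  exact le_trans ht h

lemma cnt_le {T : ℕ} (x : Fin T → ℝ) (ym : ℝ) : cnt x ym ≤ T := by
  unfold cnt
  exact (Finset.card_filter_le _ _).trans (by simp)

/-- Finite reduction of the lower CDF band: the supremum over `ym ∈ [0, y]` of the lower kl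
inverse is attained on the finite grid of (sorted) data points `x^{(t)}`. Here `s`
enumerates the order statistics, with `s 0 = 0` and `s (T+1) = 1`. -/
theorem lower_band_finite_reduction {T : ℕ} (hT : 1 ≤ T) (x : Fin T → ℝ)
    (hx : ∀ t, x t ∈ Set.Icc (0 : ℝ) 1) (s : ℕ → ℝ)
    (hs0 : s 0 = 0) (hsT : s (T + 1) = 1)
    (hsmono : ∀ i j, i ≤ j → j ≤ T + 1 → s i ≤ s j)
    (hperm : ∃ σ : Equiv.Perm (Fin T), ∀ t : Fin T, s (t + 1) = x (σ t))
    (y : ℝ) (hy : y ∈ Set.Icc (0 : ℝ) 1) (δ : ℝ) (hδ : δ ∈ Set.Ioc (0 : ℝ) 1) :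
    ⨆ ym ∈ Set.Icc (0 : ℝ) y,
        klInvMinus (empCDF x ym) ((((T : ℝ)⁻¹ : ℝ) : EReal) * bnd T (y - ym) δ) =
      ⨆ t ∈ Finset.Icc 0 (cnt x y),
        klInvMinus ((t : ℝ) / T) ((((T : ℝ)⁻¹ : ℝ) : EReal) * bnd T (y - s t) δ) := by
  obtain ⟨σ, hσ⟩ := hperm
  obtain ⟨hy0, hy1⟩ := hy
  obtain ⟨hδ0, hδ1⟩ := hδ
  have hT0 : (0:ℝ) < T := by exact_mod_cast Nat.lt_of_lt_of_le Nat.zero_lt_one hT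
  set c : EReal := (((T : ℝ)⁻¹ : ℝ) : EReal) with hc
  have hc0 : (0:EReal) ≤ c := EReal.coe_nonneg.mpr (by positivity)
  set N := cnt x y with hN
  have hNT : N ≤ T := cnt_le x y
  set F : ℝ → ℝ := fun ym => klInvMinus (empCDF x ym) (c * bnd T (y - ym) δ) with hF
  set G : ℕ → ℝ := fun t => klInvMinus ((t : ℝ) / T) (c * bnd T (y - s t) δ) with hG
  have hC0 : ∀ {g : ℝ}, 0 ≤ g → g ≤ 1 → (0:EReal) ≤ c * bnd T g δ :=
    fun hg0 hg1 => mul_nonneg hc0 (bnd_nonneg hT hg0 hg1 hδ0 hδ1)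
  have hst0 : ∀ t, t ≤ T + 1 → 0 ≤ s t := fun t ht => hs0 ▸ hsmono 0 t (Nat.zero_le _) ht
  have hstley : ∀ t, t ≤ N → s t ≤ y := fun t ht =>
    (hsmono t N ht (by omega)).trans (s_cnt_le x s hs0 hsmono σ hσ hy0)
  -- empirical CDF bounds
  have hemp0 : ∀ ym, 0 ≤ empCDF x ym := fun ym =>
    div_nonneg (Nat.cast_nonneg _) hT0.le
  have hemp1 : ∀ ym, empCDF x ym ≤ 1 := fun ym => by
    rw [empCDF, div_le_one hT0]
    exact_mod_cast cnt_le x ym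
  -- bounds on F and G
  have hF1 : ∀ ym, 0 ≤ ym → ym ≤ y → F ym ≤ 1 := fun ym h0 h1 =>
    (klInvMinus_le_self (hemp0 ym) (hemp1 ym)
      (hC0 (by linarith) (by linarith))).trans (hemp1 ym)
  have hG1 : ∀ t, t ≤ N → G t ≤ 1 := fun t ht => by
    have hp1 : (t:ℝ)/T ≤ 1 := by
      rw [div_le_one hT0]; exact_mod_cast le_trans ht hNT
    have hst := hst0 t (by omega)
    have hsy := hstley t ht
    exact (klInvMinus_le_self (div_nonneg (Nat.cast_nonneg _) hT0.le) hp1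
      (hC0 (by linarith) (by linarith))).trans hp1
  have hLbdd : BddAbove (Set.range fun ym => ⨆ _ : ym ∈ Set.Icc (0:ℝ) y, F ym) := by
    refine ⟨1, ?_⟩
    rintro _ ⟨ym, rfl⟩
    exact Real.iSup_le (fun h => hF1 ym h.1 h.2) one_pos.le
  have hRbdd : BddAbove (Set.range fun t : ℕ => ⨆ _ : t ∈ Finset.Icc 0 N, G t) := by
    refine ⟨1, ?_⟩
    rintro _ ⟨t, rfl⟩
    exact Real.iSup_le (fun ht => hG1 t (Finset.mem_Icc.mp ht).2) one_pos.le
  have hL0 : (0:ℝ) ≤ ⨆ ym ∈ Set.Icc (0:ℝ) y, F ym :=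
    Real.iSup_nonneg fun ym => Real.iSup_nonneg fun _ => klInvMinus_nonneg _ _
  have hR0 : (0:ℝ) ≤ ⨆ t ∈ Finset.Icc 0 N, G t :=
    Real.iSup_nonneg fun t => Real.iSup_nonneg fun _ => klInvMinus_nonneg _ _
  apply le_antisymm
  · apply Real.iSup_le _ hR0
    intro ym
    apply Real.iSup_le _ hR0
    rintro ⟨hym0, hymy⟩
    set k := cnt x ym with hk
    have hkN : k ≤ N := cnt_mono x hymy
    have hkT : k ≤ T := le_trans hkN hNT
    have hsk : s k ≤ ym := s_cnt_le x s hs0 hsmono σ hσ hym0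
    have hsk0 : 0 ≤ s k := hst0 k (by omega)
    have hbnd : bnd T (y - s k) δ ≤ bnd T (y - ym) δ :=
      bnd_anti hT hδ0 (by linarith) (by linarith)
    have hCle : c * bnd T (y - s k) δ ≤ c * bnd T (y - ym) δ :=
      mul_le_mul_of_nonneg_left hbnd hc0
    have hFG : F ym ≤ G k := by
      have hemp : empCDF x ym = (k:ℝ)/T := rfl
      rw [hF, hG]
      simp only [hemp]
      apply klInvMinus_anti (div_nonneg (Nat.cast_nonneg _) hT0.le)
        (by rw [div_le_one hT0]; exact_mod_cast hkT)
        (hC0 (by linarith) (by linarith)) hCle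
    have hkmem : k ∈ Finset.Icc 0 N := Finset.mem_Icc.mpr ⟨Nat.zero_le _, hkN⟩
    calc F ym ≤ G k := hFG
      _ = ⨆ _ : k ∈ Finset.Icc 0 N, G k := (ciSup_pos (f := fun _ => G k) hkmem).symm
      _ ≤ ⨆ t ∈ Finset.Icc 0 N, G t := le_ciSup hRbdd k
  · apply Real.iSup_le _ hL0
    intro t
    apply Real.iSup_le _ hL0
    intro ht
    have htN : t ≤ N := (Finset.mem_Icc.mp ht).2
    have htT : t ≤ T := le_trans htN hNT
    have hsty : s t ≤ y := hstley t htN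
    have hst0' : 0 ≤ s t := hst0 t (by omega)
    have hp12 : (t:ℝ)/T ≤ empCDF x (s t) := by
      rw [empCDF]
      gcongr
      exact_mod_cast le_cnt_s hT x s hsmono σ hσ htT
    have hGF : G t ≤ F (s t) := by
      rw [hF, hG]
      exact klInvMinus_mono (div_nonneg (Nat.cast_nonneg _) hT0.le) hp12
        (hemp1 (s t)) (hC0 (by linarith) (by linarith))
    have hmem : s t ∈ Set.Icc (0:ℝ) y := ⟨hst0', hsty⟩
    calc G t ≤ F (s t) := hGF
      _ = ⨆ _ : s t ∈ Set.Icc (0:ℝ) y, F (s t) := (ciSup_pos (f := fun _ => F (s t)) hmem).symm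
      _ ≤ ⨆ ym ∈ Set.Icc (0:ℝ) y, F ym := le_ciSup hLbdd (s t)
end
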